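/- The residue pairing is invariant under changes of the formal parameter: let φ ∈ ℂ((t)) be a formal power series of order exactly 1, i.e. φ = a₁t + a₂t² + ⋯ with a₁ ≠ 0 (so φ is a nonzero element of the field ℂ((t)), and negative powers φⁿ, n < 0, make sense in ℂ((t))). Then for all Laurent polynomials f, g ∈ ℂ[t,t⁻¹], writing f(φ), g(φ) ∈ ℂ((t)) for the evaluations obtained by substituting φ for t, one has −Res_{t=0}( f(φ) · (g(φ))' ) = −Res_{t=0}( f · g' ), i.e. ⟨f(φ), g(φ)⟩ = ⟨f, g⟩. -/

import Mathlib

open HahnSeries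

/-- Formal derivative on Laurent series: `(D f).coeff n = (n+1) * f.coeff (n+1)`. -/
noncomputable def D (f : LaurentSeries ℂ) : LaurentSeries ℂ where
  coeff := fun n => ((n + 1 : ℤ) : ℂ) * f.coeff (n + 1)
  isPWO_support' := by
    have himg : (Function.support fun n : ℤ => ((n + 1 : ℤ) : ℂ) * f.coeff (n + 1)) ⊆
        (fun n : ℤ => n - 1) '' f.support := by
      intro n hn
      have h : f.coeff (n + 1) ≠ 0 := by
        intro h
        simp [Function.mem_support, h] at hn
      exact ⟨n + 1, h, by ring⟩
    exact (f.isPWO_support.image_of_monotone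
      (fun a b hab => by simpa using sub_le_sub_right hab 1)).mono himg

/-- The residue pairing `⟨f,g⟩ = -Res_{t=0}(f·g')`, i.e. minus the coefficient of
`t⁻¹` in `f * D g`. -/
noncomputable def resPair (f g : LaurentSeries ℂ) : ℂ := -((f * D g).coeff (-1))

/-- A Laurent polynomial `Σ aₙ tⁿ` (finitely many nonzero `aₙ`, `n ∈ ℤ`) viewed as a
Laurent series. -/
noncomputable def toLS (a : ℤ →₀ ℂ) : LaurentSeries ℂ :=
  a.sum fun n c => HahnSeries.single n c

/-- Evaluation of the Laurent polynomial `Σ aₙ tⁿ` at an invertible Laurent series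
`φ`, using the field inverse of `φ` for the negative powers. -/
noncomputable def evalLP (a : ℤ →₀ ℂ) (φ : LaurentSeries ℂ) : LaurentSeries ℂ :=
  a.sum fun n c => c • φ ^ n

namespace ResAux

@[simp] lemma D_coeff (f : LaurentSeries ℂ) (n : ℤ) :
    (D f).coeff n = ((n + 1 : ℤ) : ℂ) * f.coeff (n + 1) := rfl

lemma isPWO_shift (f : LaurentSeries ℂ) :
    ({m : ℤ | f.coeff (m + 1) ≠ 0} : Set ℤ).IsPWO := by
  have himg : ({m : ℤ | f.coeff (m + 1) ≠ 0} : Set ℤ) ⊆ (fun n : ℤ => n - 1) '' f.support := by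
    intro n hn
    exact ⟨n + 1, hn, by ring⟩
  exact (f.isPWO_support.image_of_monotone
    (fun a b hab => by simpa using sub_le_sub_right hab 1)).mono himg

lemma support_D_subset (f : LaurentSeries ℂ) :
    (D f).support ⊆ {m : ℤ | f.coeff (m + 1) ≠ 0} := by
  intro n hn
  have hn' : (D f).coeff n ≠ 0 := hn
  intro h
  exact hn' (by rw [D_coeff, h, mul_zero])

lemma D_add (f g : LaurentSeries ℂ) : D (f + g) = D f + D g := by
  ext n
  simp only [D_coeff, HahnSeries.coeff_add]
  ring

lemma D_smul (c : ℂ) (f : LaurentSeries ℂ) : D (c • f) = c • D f := by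
  ext n
  simp only [D_coeff, HahnSeries.coeff_smul, smul_eq_mul]
  ring

lemma D_one : D (1 : LaurentSeries ℂ) = 0 := by
  ext n
  simp only [D_coeff, HahnSeries.coeff_zero, HahnSeries.coeff_one]
  rcases eq_or_ne (n + 1) (0 : ℤ) with h | h
  · simp [h]
  · simp [h]

lemma D_mul (f g : LaurentSeries ℂ) : D (f * g) = D f * g + f * D g := by
  ext n
  have h1 : (D f * g).coeff n =
      ∑ ij ∈ Finset.addAntidiagonal (isPWO_shift f) g.isPWO_support n,
        (D f).coeff ij.1 * g.coeff ij.2 :=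
    HahnSeries.coeff_mul_left' (isPWO_shift f) (support_D_subset f)
  have h2 : (f * D g).coeff n =
      ∑ ij ∈ Finset.addAntidiagonal f.isPWO_support (isPWO_shift g) n,
        f.coeff ij.1 * (D g).coeff ij.2 :=
    HahnSeries.coeff_mul_right' (isPWO_shift g) (support_D_subset g)
  have e1 : ∑ ij ∈ Finset.addAntidiagonal (isPWO_shift f) g.isPWO_support n,
        (D f).coeff ij.1 * g.coeff ij.2
      = ∑ ij ∈ Finset.addAntidiagonal f.isPWO_support g.isPWO_support (n + 1),
        ((ij.1 : ℤ) : ℂ) * f.coeff ij.1 * g.coeff ij.2 := by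
    refine Finset.sum_nbij' (fun ij => (ij.1 + 1, ij.2)) (fun ij => (ij.1 - 1, ij.2))
      ?_ ?_ ?_ ?_ ?_
    · intro a ha
      simp only [Finset.addAntidiagonal, Finset.mem_addAntidiagonal, Set.mem_setOf_eq, Function.mem_support] at ha ⊢
      exact ⟨ha.1, ha.2.1, by omega⟩
    · intro a ha
      simp only [Finset.addAntidiagonal, Finset.mem_addAntidiagonal, Set.mem_setOf_eq, Function.mem_support] at ha ⊢
      refine ⟨by simpa [sub_add_cancel] using ha.1, ha.2.1, by omega⟩
    · intro a _; simp
    · intro a _; simp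
    · intro a _
      simp only [D_coeff]
  have e2 : ∑ ij ∈ Finset.addAntidiagonal f.isPWO_support (isPWO_shift g) n,
        f.coeff ij.1 * (D g).coeff ij.2
      = ∑ ij ∈ Finset.addAntidiagonal f.isPWO_support g.isPWO_support (n + 1),
        f.coeff ij.1 * (((ij.2 : ℤ) : ℂ) * g.coeff ij.2) := by
    refine Finset.sum_nbij' (fun ij => (ij.1, ij.2 + 1)) (fun ij => (ij.1, ij.2 - 1))
      ?_ ?_ ?_ ?_ ?_
    · intro a ha
      simp only [Finset.addAntidiagonal, Finset.mem_addAntidiagonal, Set.mem_setOf_eq, Function.mem_support] at ha ⊢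
      exact ⟨ha.1, ha.2.1, by omega⟩
    · intro a ha
      simp only [Finset.addAntidiagonal, Finset.mem_addAntidiagonal, Set.mem_setOf_eq, Function.mem_support] at ha ⊢
      refine ⟨ha.1, by simpa [sub_add_cancel] using ha.2.1, by omega⟩
    · intro a _; simp
    · intro a _; simp
    · intro a _
      simp only [D_coeff]
  rw [HahnSeries.coeff_add, h1, h2, e1, e2, D_coeff, HahnSeries.coeff_mul, Finset.mul_sum,
    ← Finset.sum_add_distrib]
  refine Finset.sum_congr rfl fun ij hij => ?_
  simp only [Finset.addAntidiagonal, Finset.mem_addAntidiagonal] at hij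
  have hsum : ij.1 + ij.2 = n + 1 := hij.2.2
  have hcast : ((n + 1 : ℤ) : ℂ) = ((ij.1 : ℤ) : ℂ) + ((ij.2 : ℤ) : ℂ) := by
    rw [← Int.cast_add, hsum]
  rw [hcast]
  ring

lemma csmul_mul (c : ℂ) (x y : LaurentSeries ℂ) : (c • x) * y = c • (x * y) := by
  rw [← HahnSeries.single_zero_mul_eq_smul, ← HahnSeries.single_zero_mul_eq_smul, mul_assoc]

lemma mul_csmul (c : ℂ) (x y : LaurentSeries ℂ) : x * (c • y) = c • (x * y) := by
  rw [mul_comm x, csmul_mul, mul_comm y x]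

lemma res_D (h : LaurentSeries ℂ) : (D h).coeff (-1) = 0 := by
  simp

lemma D_inv (x : LaurentSeries ℂ) (hx : x ≠ 0) : D x⁻¹ = -(x⁻¹ * x⁻¹ * D x) := by
  have h2 : D x * x⁻¹ + x * D x⁻¹ = 0 := by
    rw [← D_mul, mul_inv_cancel₀ hx, D_one]
  have h3 : D x⁻¹ = x⁻¹ * (x * D x⁻¹) := by
    rw [← mul_assoc, inv_mul_cancel₀ hx, one_mul]
  have h4 : x * D x⁻¹ = -(D x * x⁻¹) := by linear_combination h2
  rw [h3, h4]
  ring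

lemma D_pow_nat (φ : LaurentSeries ℂ) (k : ℕ) :
    D (φ ^ k) * φ = ((k : ℕ) : ℂ) • (φ ^ k * D φ) := by
  induction k with
  | zero =>
    simp only [pow_zero, D_one, zero_mul, Nat.cast_zero, Int.cast_zero]
    module
  | succ k ih =>
    have hcomm : (φ ^ k * D φ) * φ = (φ ^ k * φ) * D φ := by ring
    rw [pow_succ, D_mul, add_mul, ih, csmul_mul, hcomm]
    push_cast
    module

lemma D_zpow {φ : LaurentSeries ℂ} (hφ : φ ≠ 0) (n : ℤ) :
    D (φ ^ n) = ((n : ℤ) : ℂ) • (φ ^ (n - 1) * D φ) := by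
  have key : ∀ m : ℕ, D (φ ^ (m : ℤ)) = ((m : ℤ) : ℂ) • (φ ^ ((m : ℤ) - 1) * D φ) := by
    intro m
    apply mul_right_cancel₀ hφ
    rw [zpow_natCast, D_pow_nat, csmul_mul]
    have hstep : (φ ^ ((m : ℤ) - 1) * D φ) * φ = φ ^ (m : ℤ) * D φ := by
      rw [mul_assoc, mul_comm (D φ) φ, ← mul_assoc, ← zpow_add_one₀ hφ, sub_add_cancel]
    rw [hstep, zpow_natCast]
    norm_num
  obtain ⟨m, rfl | rfl⟩ := Int.eq_nat_or_neg n
  · exact key m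
  · rw [zpow_neg, D_inv _ (zpow_ne_zero _ hφ), key m, mul_csmul]
    have hcomb : (φ ^ (m : ℤ))⁻¹ * (φ ^ (m : ℤ))⁻¹ * (φ ^ ((m : ℤ) - 1) * D φ)
        = φ ^ (-(m : ℤ) - 1) * D φ := by
      rw [← zpow_neg, ← mul_assoc, ← zpow_add₀ hφ, ← zpow_add₀ hφ]
      congr 1
      congr 1
      omega
    rw [hcomb]
    push_cast
    module

end ResAux

open ResAux

section Main

variable {φ : LaurentSeries ℂ}

lemma phi_ne (hφ₁ : φ.coeff 1 ≠ 0) : φ ≠ 0 := fun h => hφ₁ (by simp [h])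

lemma res_zpow_Dphi (hφ₀ : ∀ n : ℤ, n ≤ 0 → φ.coeff n = 0) (hφ₁ : φ.coeff 1 ≠ 0) (k : ℤ) :
    (φ ^ k * D φ).coeff (-1) = if k = -1 then 1 else 0 := by
  have hφne : φ ≠ 0 := phi_ne hφ₁
  rcases eq_or_ne k (-1) with hk | hk
  · subst hk
    rw [if_pos rfl]
    set ψ := φ⁻¹ with hψ
    have hψne : ψ ≠ 0 := inv_ne_zero hφne
    have hψφ : ψ * φ = 1 := inv_mul_cancel₀ hφne
    have hordφ : φ.order = 1 := by
      refine le_antisymm (HahnSeries.order_le_of_coeff_ne_zero hφ₁) ?_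
      by_contra h
      exact (mt HahnSeries.coeff_order_eq_zero.mp hφne) (hφ₀ _ (by omega))
    have hordψ : ψ.order = -1 := by
      have hmul := HahnSeries.order_mul hψne hφne
      rw [hψφ, HahnSeries.order_one, hordφ] at hmul
      omega
    have hψlow : ∀ i : ℤ, i < -1 → ψ.coeff i = 0 := by
      intro i hi
      exact HahnSeries.coeff_eq_zero_of_lt_order (by rw [hordψ]; exact_mod_cast hi)
    have hψ1 : ψ.coeff (-1) * φ.coeff 1 = 1 := by
      have h0 : (ψ * φ).coeff 0 = 1 := by rw [hψφ]; simp [HahnSeries.coeff_one]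
      rw [HahnSeries.coeff_mul] at h0
      rwa [Finset.sum_eq_single ((-1 : ℤ), (1 : ℤ))] at h0
      · intro b hb hne
        simp only [Finset.mem_addAntidiagonal, Function.mem_support] at hb
        exfalso
        have hb1 : -1 ≤ b.1 := by
          by_contra h
          exact hb.1 (hψlow b.1 (by omega))
        have hb2 : 1 ≤ b.2 := by
          by_contra h
          exact hb.2.1 (hφ₀ b.2 (by omega))
        have hbe : b = (-1, 1) := by
          have := hb.2.2
          ext <;> omega
        exact hne hbe
      · intro h
        simp only [Finset.mem_addAntidiagonal, Function.mem_support] at h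
        push_neg at h
        rcases eq_or_ne (ψ.coeff (-1)) 0 with h1 | h1
        · rw [h1, zero_mul]
        · rcases eq_or_ne (φ.coeff 1) 0 with h2 | h2
          · rw [h2, mul_zero]
          · exact absurd (by norm_num : (-1 : ℤ) + 1 = 0) (h h1 h2)
    have hDsupp : ∀ j : ℤ, (D φ).coeff j ≠ 0 → 0 ≤ j := by
      intro j hj
      by_contra h
      exact hj (by simp [hφ₀ (j + 1) (by omega)])
    have hD0 : (D φ).coeff 0 = φ.coeff 1 := by simp
    rw [zpow_neg_one, HahnSeries.coeff_mul]
    rw [Finset.sum_eq_single ((-1 : ℤ), (0 : ℤ))]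
    · rw [← hψ, hD0, hψ1]
    · intro b hb hne
      simp only [Finset.mem_addAntidiagonal, Function.mem_support] at hb
      exfalso
      have hb1 : -1 ≤ b.1 := by
        by_contra h
        exact hb.1 (hψlow b.1 (by omega))
      have hb2 : 0 ≤ b.2 := hDsupp b.2 hb.2.1
      have hbe : b = (-1, 0) := by
        have := hb.2.2
        ext <;> omega
      exact hne hbe
    · intro h
      simp only [Finset.mem_addAntidiagonal, Function.mem_support] at h
      push_neg at h
      rcases eq_or_ne (φ⁻¹.coeff (-1)) 0 with h1 | h1
      · rw [h1, zero_mul]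
      · rcases eq_or_ne ((D φ).coeff 0) 0 with h2 | h2
        · rw [h2, mul_zero]
        · exact absurd (by norm_num : (-1 : ℤ) + 0 = -1) (h h1 h2)
  · have hk' : ((k + 1 : ℤ) : ℂ) ≠ 0 := by
      exact_mod_cast (by omega : (k + 1 : ℤ) ≠ 0)
    have hD := D_zpow hφne (k + 1)
    have h0 : (D (φ ^ (k + 1))).coeff (-1) = 0 := res_D _
    rw [hD] at h0
    simp only [add_sub_cancel_right, HahnSeries.coeff_smul, smul_eq_mul] at h0
    rw [if_neg hk]
    exact (mul_eq_zero.mp h0).resolve_left hk'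

lemma D_single (n : ℤ) (d : ℂ) :
    D (HahnSeries.single n d : LaurentSeries ℂ)
      = HahnSeries.single (n - 1) (((n : ℤ) : ℂ) * d) := by
  ext k
  simp only [D_coeff, HahnSeries.coeff_single]
  rcases eq_or_ne k (n - 1) with h | h
  · subst h
    simp [sub_add_cancel]
  · have hne : k + 1 ≠ n := by omega
    simp [h, hne]

lemma pair_single (hφ₀ : ∀ n : ℤ, n ≤ 0 → φ.coeff n = 0) (hφ₁ : φ.coeff 1 ≠ 0)
    (m n : ℤ) (c d : ℂ) :
    resPair (c • φ ^ m) (d • φ ^ n) =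
      resPair (HahnSeries.single m c : LaurentSeries ℂ) (HahnSeries.single n d) := by
  have hφne : φ ≠ 0 := phi_ne hφ₁
  have hL : (c • φ ^ m) * D (d • φ ^ n) =
      (c * (d * ((n : ℤ) : ℂ))) • (φ ^ (m + (n - 1)) * D φ) := by
    rw [D_smul, D_zpow hφne, csmul_mul, mul_csmul, mul_csmul, ← mul_assoc,
      ← zpow_add₀ hφne, smul_smul, smul_smul, mul_assoc]
  have hR : (HahnSeries.single m c : LaurentSeries ℂ) * D (HahnSeries.single n d) =
      HahnSeries.single (m + (n - 1)) (c * (((n : ℤ) : ℂ) * d)) := by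
    rw [D_single, HahnSeries.single_mul_single]
  rw [resPair, resPair, hL, hR, HahnSeries.coeff_smul, HahnSeries.coeff_single,
    res_zpow_Dphi hφ₀ hφ₁, smul_eq_mul]
  rcases eq_or_ne (m + (n - 1)) (-1 : ℤ) with h | h
  · rw [if_pos h, if_pos h.symm]
    ring
  · rw [if_neg h, if_neg (Ne.symm h)]
    ring

/-- The residue pairing as a bilinear map. -/
noncomputable def RP : LaurentSeries ℂ →ₗ[ℂ] LaurentSeries ℂ →ₗ[ℂ] ℂ :=
  LinearMap.mk₂ ℂ (fun f g => resPair f g)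
    (fun f₁ f₂ g => by
      simp only [resPair, add_mul, HahnSeries.coeff_add]
      ring)
    (fun c f g => by
      simp only [resPair, csmul_mul, HahnSeries.coeff_smul, smul_eq_mul]
      ring)
    (fun f g₁ g₂ => by
      simp only [resPair, D_add, mul_add, HahnSeries.coeff_add]
      ring)
    (fun c f g => by
      simp only [resPair, D_smul, mul_csmul, HahnSeries.coeff_smul, smul_eq_mul]
      ring)

lemma RP_apply (f g : LaurentSeries ℂ) : RP f g = resPair f g := rfl

lemma expand (f g : ℤ →₀ ℂ) (F G : ℤ → ℂ → LaurentSeries ℂ) :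
    resPair (f.sum F) (g.sum G) =
      f.sum fun m c => g.sum fun n d => resPair (F m c) (G n d) := by
  have h1 : resPair (f.sum F) (g.sum G) = RP.flip (g.sum G) (f.sum F) := rfl
  rw [h1, map_finsuppSum]
  refine Finsupp.sum_congr fun m _ => ?_
  show RP (F m (f m)) (g.sum G) = _
  rw [map_finsuppSum]
  rfl

end Main

/-- the residue pairing is invariant under changes of the formal
parameter: if `φ = a₁t + a₂t² + ⋯` with `a₁ ≠ 0` (a series of order exactly `1`),
then `⟨f(φ), g(φ)⟩ = ⟨f, g⟩` for all Laurent polynomials `f, g`. -/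
theorem resPair_change_of_parameter (φ : LaurentSeries ℂ)
    (hφ₀ : ∀ n : ℤ, n ≤ 0 → φ.coeff n = 0) (hφ₁ : φ.coeff 1 ≠ 0)
    (f g : ℤ →₀ ℂ) :
    resPair (evalLP f φ) (evalLP g φ) = resPair (toLS f) (toLS g) := by
  have h1 : evalLP f φ = f.sum fun n c => c • φ ^ n := rfl
  have h2 : evalLP g φ = g.sum fun n c => c • φ ^ n := rfl
  have h3 : toLS f = f.sum fun n c => (HahnSeries.single n c : LaurentSeries ℂ) := rfl
  have h4 : toLS g = g.sum fun n c => (HahnSeries.single n c : LaurentSeries ℂ) := rfl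
  rw [h1, h2, h3, h4, expand, expand]
  refine Finsupp.sum_congr fun m _ => ?_
  refine Finsupp.sum_congr fun n _ => ?_
  exact pair_single hφ₀ hφ₁ m n (f m) (g n)
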